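/- The order ▷_ℓ is finitely branching: for every term or sequence a, the set {b : a ▷_ℓ b} is finite (up to the relevant syntactic identifications). -/

import Mathlib

/-- First-order terms over signature `F` and variables `V`. -/
inductive Trm (F V : Type) where
  | var : V → Trm F V
  | fn : F → List (Trm F V) → Trm F V

/-- `SSub s t` : `t` is a strict subterm of `s`. -/
inductive SSub {F V : Type} : Trm F V → Trm F V → Prop where
  | arg {f ts t} : t ∈ ts → SSub (Trm.fn f ts) t
  | trans {f ts s t} : s ∈ ts → SSub s t → SSub (Trm.fn f ts) t

/-- Reflexive closure of a relation, used for product extensions. -/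
def EqOr {α : Type} (r : α → α → Prop) (a b : α) : Prop := a = b ∨ r a b

/-- Product extension of a relation on lists: componentwise equal-or-smaller,
with at least one component strictly smaller. -/
def ProdExtL {α : Type} (r : α → α → Prop) (xs ys : List α) : Prop :=
  List.Forall₂ (EqOr r) xs ys ∧
    ∃ i, ∃ (h₁ : i < xs.length) (h₂ : i < ys.length), r xs[i] ys[i]

/-- Elements compared by `▷_ℓ`: terms (inl) or sequences of terms (inr). -/
abbrev TS (F V : Type) := Trm F V ⊕ List (Trm F V)

/-- Identification of a term with the singleton sequence. -/
def toL {F V : Type} : TS F V → List (Trm F V) := Sum.elim (fun t => [t]) id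

mutual
  /-- The auxiliary order `▷_ℓ` (Definition of `poel`) on terms and sequences,
  induced by a precedence `prec` and the width bound `ℓ`. -/
  inductive Poel {F V : Type} (prec : F → F → Prop) (ℓ : ℕ) : TS F V → TS F V → Prop where
    /- clause (1): precedence descent to strict subterms, width at most ℓ -/
    | ia {f g : F} {ss ts : List (Trm F V)} :
        prec f g → (∀ t ∈ ts, SSub (Trm.fn f ss) t) → ts.length ≤ ℓ →
        Poel prec ℓ (Sum.inl (Trm.fn f ss)) (Sum.inl (Trm.fn g ts))
    /- clause (2): same symbol, product extension of the strict-subterm order -/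
    | tsc {f : F} {ss ts : List (Trm F V)} :
        ProdExtL SSub ss ts →
        Poel prec ℓ (Sum.inl (Trm.fn f ss)) (Sum.inl (Trm.fn f ts))
    /- clause (3): descent from a term to a sequence of at most ℓ smaller terms -/
    | ialst {f : F} {ss ts : List (Trm F V)} :
        (∀ t ∈ ts, Poel prec ℓ (Sum.inl (Trm.fn f ss)) (Sum.inl t)) → ts.length ≤ ℓ →
        Poel prec ℓ (Sum.inl (Trm.fn f ss)) (Sum.inr ts)
    /- clause (4): sequences, splitting `ts = b₁ ++ ⋯ ++ b_k` with
       `⟨s₁,…,s_k⟩` greater than `⟨b₁,…,b_k⟩` in the product extension of `▷_ℓ` -/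
    | ms {ss ts : List (Trm F V)} (bs : List (TS F V)) :
        ts = (bs.map toL).flatten →
        PoelProd prec ℓ (ss.map Sum.inl) bs →
        Poel prec ℓ (Sum.inr ss) (Sum.inr ts)

  /-- Product extension of `▷_ℓ`: componentwise equal-or-smaller with at
  least one strict decrease. -/
  inductive PoelProd {F V : Type} (prec : F → F → Prop) (ℓ : ℕ) :
      List (TS F V) → List (TS F V) → Prop where
    | strict {a b as bs} : Poel prec ℓ a b → PoelGE prec ℓ as bs →
        PoelProd prec ℓ (a :: as) (b :: bs)
    | cons_eq {a as bs} : PoelProd prec ℓ as bs → PoelProd prec ℓ (a :: as) (a :: bs)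
    | cons_lt {a b as bs} : Poel prec ℓ a b → PoelProd prec ℓ as bs →
        PoelProd prec ℓ (a :: as) (b :: bs)

  /-- Componentwise equal-or-smaller (w.r.t. `▷_ℓ`) lists of equal length. -/
  inductive PoelGE {F V : Type} (prec : F → F → Prop) (ℓ : ℕ) :
      List (TS F V) → List (TS F V) → Prop where
    | nil : PoelGE prec ℓ [] []
    | cons_eq {a as bs} : PoelGE prec ℓ as bs → PoelGE prec ℓ (a :: as) (a :: bs)
    | cons_lt {a b as bs} : Poel prec ℓ a b → PoelGE prec ℓ as bs →
        PoelGE prec ℓ (a :: as) (b :: bs)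
end

section Aux

variable {F V : Type}

/-- List of all strict subterms. -/
def subsList : Trm F V → List (Trm F V)
  | .var _ => []
  | .fn _ ts => ts.attach.flatMap (fun x => x.1 :: subsList x.1)
termination_by t => sizeOf t
decreasing_by
  simp only [Trm.fn.sizeOf_spec]
  have := List.sizeOf_lt_of_mem x.2
  omega

lemma mem_subsList {t s : Trm F V} (h : SSub t s) : s ∈ subsList t := by
  induction h with
  | arg hm =>
    simp only [subsList, List.mem_flatMap]
    exact ⟨⟨_, hm⟩, List.mem_attach _ _, List.mem_cons_self⟩
  | trans hm hsub ih =>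
    simp only [subsList, List.mem_flatMap]
    exact ⟨⟨_, hm⟩, List.mem_attach _ _, List.mem_cons_of_mem _ ih⟩

lemma finite_ssub (t : Trm F V) : {s | SSub t s}.Finite :=
  (subsList t).finite_toSet.subset (fun _ hs => mem_subsList hs)

lemma finite_len_le {α : Type} {s : Set α} (hs : s.Finite) :
    ∀ n, {l : List α | l.length ≤ n ∧ ∀ x ∈ l, x ∈ s}.Finite := by
  intro n
  induction n with
  | zero =>
    apply Set.Finite.subset (Set.finite_singleton [])
    rintro l ⟨h1, -⟩
    simp only [Nat.le_zero, List.length_eq_zero_iff] at h1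
    simp [h1]
  | succ n ih =>
    apply Set.Finite.subset ((Set.Finite.image2 List.cons hs ih).insert [])
    rintro (_ | ⟨x, l⟩) ⟨h1, h2⟩
    · exact Set.mem_insert _ _
    · exact Set.mem_insert_of_mem _ <|
        Set.mem_image2_of_mem (h2 x (List.mem_cons_self))
          ⟨Nat.le_of_succ_le_succ h1, fun y hy => h2 y (List.mem_cons_of_mem _ hy)⟩

lemma finite_forall₂ {α β : Type} {R : α → β → Prop} (h : ∀ a, {b | R a b}.Finite)
    (l : List α) : {bs | List.Forall₂ R l bs}.Finite := by
  induction l with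
  | nil =>
    apply Set.Finite.subset (Set.finite_singleton [])
    intro bs hb; cases hb; rfl
  | cons a l ih =>
    apply Set.Finite.subset (Set.Finite.image2 List.cons (h a) ih)
    intro bs hb
    cases hb with
    | cons h1 h2 => exact Set.mem_image2_of_mem h1 h2

lemma forall₂_mem {α β : Type} {R : α → β → Prop} {ss : List α} {ts : List β}
    (h : List.Forall₂ R ss ts) {x : β} (hx : x ∈ ts) : ∃ s ∈ ss, R s x := by
  induction h with
  | nil => cases hx
  | cons h1 _ ih =>
    rcases List.mem_cons.mp hx with rfl | hx
    · exact ⟨_, List.mem_cons_self, h1⟩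
    · obtain ⟨s, hs, hr⟩ := ih hx
      exact ⟨s, List.mem_cons_of_mem _ hs, hr⟩

lemma inl_lower {prec : F → F → Prop} {ℓ : ℕ} {f : F} {ss : List (Trm F V)} {u : Trm F V}
    (h : Poel prec ℓ (Sum.inl (Trm.fn f ss)) (Sum.inl u)) :
    ∃ g us, u = Trm.fn g us ∧ us.length ≤ max ℓ ss.length ∧
      ∀ x ∈ us, SSub (Trm.fn f ss) x := by
  cases h with
  | ia hp hsub hlen => exact ⟨_, _, rfl, le_max_of_le_left hlen, hsub⟩
  | tsc hpe =>
    obtain ⟨hf, -⟩ := hpe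
    refine ⟨_, _, rfl, ?_, ?_⟩
    · rw [← hf.length_eq]; exact le_max_right _ _
    · intro x hx
      obtain ⟨s, hs, hr⟩ := forall₂_mem hf hx
      rcases hr with rfl | hr
      · exact SSub.arg hs
      · exact SSub.trans hs hr

lemma term_lower_finite [Finite F] (prec : F → F → Prop) (ℓ : ℕ) (t : Trm F V) :
    {b | Poel prec ℓ (Sum.inl t) b}.Finite := by
  cases t with
  | var v =>
    apply Set.Finite.subset (Set.finite_empty)
    intro b hb; cases hb
  | fn f ss =>
    set T : Set (Trm F V) := {u | ∃ g us, u = Trm.fn g us ∧ us.length ≤ max ℓ ss.length ∧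
      ∀ x ∈ us, SSub (Trm.fn f ss) x} with hTdef
    have hT : T.Finite := by
      have h2 : {us : List (Trm F V) | us.length ≤ max ℓ ss.length ∧
          ∀ x ∈ us, x ∈ {s | SSub (Trm.fn f ss) s}}.Finite :=
        finite_len_le (finite_ssub _) _
      apply Set.Finite.subset (Set.Finite.image2 Trm.fn Set.finite_univ h2)
      rintro u ⟨g, us, rfl, h1, h3⟩
      exact Set.mem_image2_of_mem (Set.mem_univ g) ⟨h1, h3⟩
    apply Set.Finite.subset ((hT.image Sum.inl).union
      ((finite_len_le hT ℓ).image Sum.inr))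
    intro b hb
    cases b with
    | inl u => exact Or.inl ⟨u, inl_lower hb, rfl⟩
    | inr ts =>
      refine Or.inr ⟨ts, ⟨?_, ?_⟩, rfl⟩
      · cases hb with | ialst h hlen => exact hlen
      · cases hb with | ialst h hlen => exact fun x hx => inl_lower (h x hx)

lemma poelGE_forall₂ {prec : F → F → Prop} {ℓ : ℕ} :
    ∀ {as bs : List (TS F V)}, PoelGE prec ℓ as bs →
      List.Forall₂ (EqOr (Poel prec ℓ)) as bs := by
  intro as
  induction as with
  | nil => intro bs h; cases h; exact List.Forall₂.nil
  | cons a as ih =>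
    intro bs h
    cases h with
    | cons_eq h' => exact List.Forall₂.cons (Or.inl rfl) (ih h')
    | cons_lt hp h' => exact List.Forall₂.cons (Or.inr hp) (ih h')

lemma poelProd_forall₂ {prec : F → F → Prop} {ℓ : ℕ} :
    ∀ {as bs : List (TS F V)}, PoelProd prec ℓ as bs →
      List.Forall₂ (EqOr (Poel prec ℓ)) as bs := by
  intro as
  induction as with
  | nil => intro bs h; cases h
  | cons a as ih =>
    intro bs h
    cases h with
    | strict hp hge => exact List.Forall₂.cons (Or.inr hp) (poelGE_forall₂ hge)
    | cons_eq h' => exact List.Forall₂.cons (Or.inl rfl) (ih h')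
    | cons_lt hp h' => exact List.Forall₂.cons (Or.inr hp) (ih h')

end Aux

/-- `▷_ℓ` is finitely branching: for every term or sequence `a`, the set
`{b : a ▷_ℓ b}` is finite. -/
theorem poel_finitely_branching {F V : Type} [Finite F] (prec : F → F → Prop)
    (hirr : ∀ f, ¬ prec f f) (htrans : ∀ f g h, prec f g → prec g h → prec f h)
    (ℓ : ℕ) (hℓ : 1 ≤ ℓ) (a : TS F V) :
    {b | Poel prec ℓ a b}.Finite := by
  cases a with
  | inl t => exact term_lower_finite prec ℓ t
  | inr ss =>
    have hfib : ∀ s : Trm F V,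
        {b : TS F V | EqOr (Poel prec ℓ) (Sum.inl s) b}.Finite := by
      intro s
      apply Set.Finite.subset ((term_lower_finite prec ℓ s).insert (Sum.inl s))
      rintro b (rfl | h)
      · exact Set.mem_insert _ _
      · exact Set.mem_insert_of_mem _ h
    have hbs : {bs : List (TS F V) |
        List.Forall₂ (fun s b => EqOr (Poel prec ℓ) (Sum.inl s) b) ss bs}.Finite :=
      finite_forall₂ hfib ss
    apply Set.Finite.subset (((hbs.image (fun bs => (bs.map toL).flatten)).image Sum.inr))
    intro b hb
    cases hb with
    | ms bs hts hprod =>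
      refine ⟨_, ⟨bs, ?_, rfl⟩, by rw [hts]⟩
      exact List.forall₂_map_left_iff.mp (poelProd_forall₂ hprod)
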